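/- Let ρ ∈ (0,1), let n ≥ 1 be a natural number, and let t ∈ (0, e^{−7/2}]. Then |Φ(ρn+1) − Φ(ρn+ρ+1)| < |ln t − Φ(ρn+1)|. -/

import Mathlib

open Real Filter Topology

/-- The digamma function `Φ(z) = Γ'(z)/Γ(z)`. -/
noncomputable def digamma (z : ℝ) : ℝ := deriv Real.Gamma z / Real.Gamma z

private lemma Gamma_diffAt {x : ℝ} (hx : 0 < x) : DifferentiableAt ℝ Real.Gamma x :=
  Real.differentiableAt_Gamma fun m ↦ ((neg_nonpos.mpr m.cast_nonneg).trans_lt hx).ne'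

private lemma logGamma_diffAt {x : ℝ} (hx : 0 < x) :
    DifferentiableAt ℝ (Real.log ∘ Real.Gamma) x :=
  (Gamma_diffAt hx).log (Real.Gamma_pos_of_pos hx).ne'

private lemma digamma_eq {x : ℝ} (hx : 0 < x) :
    digamma x = deriv (Real.log ∘ Real.Gamma) x := by
  rw [digamma, Function.comp_def,
    deriv.log (Gamma_diffAt hx) (Real.Gamma_pos_of_pos hx).ne']

private lemma digamma_mono {x y : ℝ} (hx : 0 < x) (hxy : x ≤ y) :
    digamma x ≤ digamma y := by
  rcases eq_or_lt_of_le hxy with rfl | h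
  · exact le_rfl
  have hy : 0 < y := hx.trans h
  rw [digamma_eq hx, digamma_eq hy]
  have hc := Real.convexOn_log_Gamma
  calc deriv (Real.log ∘ Real.Gamma) x
      ≤ slope (Real.log ∘ Real.Gamma) x y :=
        hc.deriv_le_slope (Set.mem_Ioi.mpr hx) (Set.mem_Ioi.mpr hy) h (logGamma_diffAt hx)
    _ ≤ deriv (Real.log ∘ Real.Gamma) y :=
        hc.slope_le_deriv (Set.mem_Ioi.mpr hx) (Set.mem_Ioi.mpr hy) h (logGamma_diffAt hy)

private lemma digamma_rec {x : ℝ} (hx : 0 < x) :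
    digamma (x + 1) = digamma x + 1 / x := by
  rw [digamma_eq hx, digamma_eq (by positivity : (0:ℝ) < x + 1)]
  rw [← deriv_comp_add_const, one_div, ← Real.deriv_log,
    ← deriv_fun_add (logGamma_diffAt hx) (Real.differentiableAt_log hx.ne')]
  apply Filter.EventuallyEq.deriv_eq
  filter_upwards [eventually_gt_nhds hx] with y hy
  simp only [Function.comp_apply, Real.Gamma_add_one hy.ne',
    Real.log_mul hy.ne' (Real.Gamma_pos_of_pos hy).ne', add_comm]

private lemma digamma_one : digamma 1 = -Real.eulerMascheroniConstant := by
  rw [digamma, Real.hasDerivAt_Gamma_one.deriv, Real.Gamma_one, div_one]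

theorem digamma_diff_lt (ρ t : ℝ) (n : ℕ) (hρ : ρ ∈ Set.Ioo (0:ℝ) 1) (hn : 1 ≤ n)
    (ht : t ∈ Set.Ioc (0:ℝ) (Real.exp (-(7/2 : ℝ)))) :
    |digamma (ρ * n + 1) - digamma (ρ * n + ρ + 1)| < |Real.log t - digamma (ρ * n + 1)| := by
  obtain ⟨hρ0, hρ1⟩ := hρ
  obtain ⟨ht0, ht1⟩ := ht
  have hn' : (1:ℝ) ≤ n := by exact_mod_cast hn
  have hρn : 0 < ρ * n := by positivity
  set x : ℝ := ρ * n + 1 with hxdef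
  have hx1 : 1 < x := by simp [hxdef]; positivity
  have hx0 : 0 < x := by linarith
  -- lower bound for digamma x
  have hγ := Real.eulerMascheroniConstant_lt_two_thirds
  have hlow : -1 < digamma x := by
    have := digamma_mono one_pos hx1.le
    rw [digamma_one] at this
    linarith
  -- bounds on the LHS difference
  have h1 : digamma x ≤ digamma (x + ρ) := digamma_mono hx0 (by linarith)
  have h2 : digamma (x + ρ) ≤ digamma (x + 1) := digamma_mono (by positivity) (by linarith)
  have h3 : digamma (x + 1) = digamma x + 1 / x := digamma_rec hx0
  have hxinv : 1 / x < 1 := by rw [div_lt_one hx0]; exact hx1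
  -- bound on log t
  have hlog : Real.log t ≤ -(7/2 : ℝ) := by
    calc Real.log t ≤ Real.log (Real.exp (-(7/2:ℝ))) := Real.log_le_log ht0 ht1
      _ = -(7/2:ℝ) := Real.log_exp _
  have hxρ : ρ * n + ρ + 1 = x + ρ := by ring
  rw [hxρ, abs_sub_comm, abs_of_nonneg (by linarith),
    abs_of_neg (by linarith : Real.log t - digamma x < 0)]
  linarith
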